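/- arXiv:1106.3442 — 3 statements merged into one kernel-verified Lean document; each statement's English description precedes it below -/
import Mathlib

section
/- Let G be a group, C a subgroup of G contained in the center Z(G), and H a perfect subgroup of G such that every element of G can be written as a product c·h with c ∈ C and h ∈ H. Then H equals the commutator subgroup ⁅G,G⁆ of G. -/
open scoped commutatorElement

private lemma central_mul_left_commutator {G : Type*} [Group G] (c h k : G)
    (hc : ∀ x : G, x * c = c * x) : ⁅c * h, k⁆ = ⁅h, k⁆ := by
  have e1 : ⁅c * h, k⁆ = c * (h * k * h⁻¹) * c⁻¹ * k⁻¹ := by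
    simp only [commutatorElement_def, mul_inv_rev]; group
  rw [e1, ← hc (h * k * h⁻¹), mul_assoc (h * k * h⁻¹), mul_inv_cancel, mul_one,
    commutatorElement_def]

private lemma central_mul_right_commutator {G : Type*} [Group G] (c h k : G)
    (hc : ∀ x : G, x * c = c * x) : ⁅h, c * k⁆ = ⁅h, k⁆ := by
  rw [← commutatorElement_inv, central_mul_left_commutator c k h hc,
    commutatorElement_inv]

/-- If `C` is a central subgroup of `G` and `H` is a perfect subgroup such that every
element of `G` is a product `c * h` with `c ∈ C`, `h ∈ H`, then `H` equals the
commutator subgroup of `G`. -/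
theorem perfect_central_complement_eq_commutator
    {G : Type*} [Group G] (C H : Subgroup G)
    (hC : C ≤ Subgroup.center G)
    (hH : commutator ↥H = ⊤)
    (hprod : ∀ g : G, ∃ c ∈ C, ∃ h ∈ H, g = c * h) :
    H = commutator G := by
  apply le_antisymm
  · -- H ≤ commutator G, using perfection
    have hmap : Subgroup.map H.subtype (commutator ↥H) = ⁅H, H⁆ := by
      rw [commutator_def, Subgroup.map_commutator, ← MonoidHom.range_eq_map,
        Subgroup.range_subtype]
    rw [hH, ← MonoidHom.range_eq_map, Subgroup.range_subtype] at hmap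
    rw [hmap]
    exact Subgroup.commutator_mono le_top le_top
  · -- commutator G ≤ H
    rw [commutator_eq_closure]
    refine (Subgroup.closure_le _).mpr ?_
    rintro x ⟨g₁, g₂, rfl⟩
    obtain ⟨c₁, hc₁, h₁, hh₁, rfl⟩ := hprod g₁
    obtain ⟨c₂, hc₂, h₂, hh₂, rfl⟩ := hprod g₂
    have z₁ : ∀ x : G, x * c₁ = c₁ * x := Subgroup.mem_center_iff.mp (hC hc₁)
    have z₂ : ∀ x : G, x * c₂ = c₂ * x := Subgroup.mem_center_iff.mp (hC hc₂)
    have e : ⁅c₁ * h₁, c₂ * h₂⁆ = ⁅h₁, h₂⁆ := by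
      rw [central_mul_left_commutator c₁ h₁ _ z₁,
        central_mul_right_commutator c₂ h₁ h₂ z₂]
    show (⁅c₁ * h₁, c₂ * h₂⁆ : G) ∈ H
    rw [e, commutatorElement_def]
    exact H.mul_mem (H.mul_mem (H.mul_mem hh₁ hh₂) (H.inv_mem hh₁)) (H.inv_mem hh₂)
end

section
/- Let f : G → Q be a surjective group homomorphism and n ≥ 1 a natural number such that every element of Q is a product of at most n commutators of elements of Q. Then every element g of G can be written as g = z·x, where z ∈ ker f and x ∈ G is a product of at most n commutators of elements of G; moreover, if g lies in the commutator subgroup ⁅G,G⁆, then z can be chosen in ker f ∩ ⁅G,G⁆. -/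
open scoped commutatorElement

/-- The set of elements of `G` that are products of at most `n` commutators. -/
def commutatorProds (G : Type*) [Group G] (n : ℕ) : Set G :=
  {x | ∃ l : List (G × G), l.length ≤ n ∧ x = (l.map fun p => ⁅p.1, p.2⁆).prod}

theorem key_aux {G Q : Type*} [Group G] [Group Q] (f : G →* Q) (n : ℕ)
    (hf : Function.Surjective f)
    (hQ : ∀ q : Q, q ∈ commutatorProds Q n) (g : G) :
    ∃ x ∈ commutatorProds G n, x ∈ commutator G ∧ f (g * x⁻¹) = 1 := by
  obtain ⟨l, hl, hprod⟩ := hQ (f g)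
  set l' : List (G × G) := l.map fun p =>
    ((hf p.1).choose, (hf p.2).choose) with hl'
  refine ⟨(l'.map fun p => ⁅p.1, p.2⁆).prod, ⟨l', by simpa [hl'] using hl, rfl⟩, ?_, ?_⟩
  · exact Subgroup.list_prod_mem _ (by
      intro x hx
      simp only [List.mem_map] at hx
      obtain ⟨p, _, rfl⟩ := hx
      exact Subgroup.commutator_mem_commutator (Subgroup.mem_top _) (Subgroup.mem_top _))
  · have : f (l'.map fun p => ⁅p.1, p.2⁆).prod = f g := by
      rw [hprod, map_list_prod]
      congr 1
      rw [hl', List.map_map, List.map_map]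
      refine List.map_congr_left fun p _ => ?_
      simp [Function.comp, map_commutatorElement, (hf p.1).choose_spec, (hf p.2).choose_spec]
    simp [this]

/-- If `f : G → Q` is a surjective homomorphism and every element of `Q` is a product
of at most `n` commutators, then every `g ∈ G` can be written as `g = z * x` with
`z ∈ ker f` and `x` a product of at most `n` commutators of `G`; moreover if
`g ∈ ⁅G,G⁆` then `z` can be chosen in `ker f ∩ ⁅G,G⁆`. -/
theorem exists_ker_mul_commutatorProds_of_surjective
    {G Q : Type*} [Group G] [Group Q] (f : G →* Q) (n : ℕ)
    (hf : Function.Surjective f) (hn : 1 ≤ n)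
    (hQ : ∀ q : Q, q ∈ commutatorProds Q n) :
    (∀ g : G, ∃ z ∈ f.ker, ∃ x ∈ commutatorProds G n, g = z * x) ∧
      (∀ g ∈ commutator G, ∃ z ∈ f.ker ⊓ commutator G,
        ∃ x ∈ commutatorProds G n, g = z * x) := by
  constructor
  · intro g
    obtain ⟨x, hx, hxc, hker⟩ := key_aux f n hf hQ g
    exact ⟨g * x⁻¹, MonoidHom.mem_ker.mpr hker, x, hx, by group⟩
  · intro g hg
    obtain ⟨x, hx, hxc, hker⟩ := key_aux f n hf hQ g
    exact ⟨g * x⁻¹, Subgroup.mem_inf.mpr ⟨MonoidHom.mem_ker.mpr hker, mul_mem hg (inv_mem hxc)⟩, x, hx, by group⟩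
end

section
/- Let f : G → Q be a surjective group homomorphism and n ≥ 1 a natural number such that every element of Q is a product of at most n commutators of elements of Q. Let Xₙ ⊆ G be the set of products of at most n commutators ⁅u,v⁆ in which each of u and v is itself a product of at most n commutators of elements of G. Then every element a of the second derived subgroup ⁅⁅G,G⁆,⁅G,G⁆⁆ of G can be written as a = c·b with b ∈ Xₙ and c ∈ ker f ∩ ⁅⁅G,G⁆,⁅G,G⁆⁆. -/
open scoped commutatorElement

/-- The set `Xₙ` of products of at most `n` commutators `⁅u,v⁆` in which each of `u`
and `v` is itself a product of at most `n` commutators of `G`. -/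
def iteratedCommutatorProds (G : Type*) [Group G] (n : ℕ) : Set G :=
  {x | ∃ l : List (G × G), l.length ≤ n ∧
    (∀ p ∈ l, p.1 ∈ commutatorProds G n ∧ p.2 ∈ commutatorProds G n) ∧
    x = (l.map fun p => ⁅p.1, p.2⁆).prod}

lemma commutatorProds_subset_commutator (G : Type*) [Group G] (n : ℕ) :
    commutatorProds G n ⊆ (commutator G : Subgroup G) := by
  rintro x ⟨l, -, rfl⟩
  apply list_prod_mem
  intro y hy
  simp only [List.mem_map] at hy
  obtain ⟨p, -, rfl⟩ := hy
  exact Subgroup.commutator_mem_commutator (Subgroup.mem_top _) (Subgroup.mem_top _)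

lemma iterated_subset_second (G : Type*) [Group G] (n : ℕ) :
    iteratedCommutatorProds G n ⊆ (⁅commutator G, commutator G⁆ : Subgroup G) := by
  rintro x ⟨l, -, hmem, rfl⟩
  apply list_prod_mem
  intro y hy
  simp only [List.mem_map] at hy
  obtain ⟨p, hp, rfl⟩ := hy
  exact Subgroup.commutator_mem_commutator
    (commutatorProds_subset_commutator G n (hmem p hp).1)
    (commutatorProds_subset_commutator G n (hmem p hp).2)

lemma map_comm_prod {G Q : Type*} [Group G] [Group Q] (f : G →* Q) (l : List (G × G)) :
    f (l.map fun p => ⁅p.1, p.2⁆).prod = ((l.map fun p => (f p.1, f p.2)).map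
      fun p => ⁅p.1, p.2⁆).prod := by
  rw [map_list_prod, List.map_map, List.map_map]
  congr 1
  ext p
  simp [map_commutatorElement]

lemma lift_commutatorProds {G Q : Type*} [Group G] [Group Q] (f : G →* Q) (n : ℕ)
    (hf : Function.Surjective f) (hQ : ∀ q : Q, q ∈ commutatorProds Q n) (q : Q) :
    ∃ u ∈ commutatorProds G n, f u = q := by
  obtain ⟨l, hl, rfl⟩ := hQ q
  refine ⟨(l.map fun p => (Function.surjInv hf p.1, Function.surjInv hf p.2)).map
      (fun p => ⁅p.1, p.2⁆) |>.prod,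
    ⟨_, by simpa using hl, rfl⟩, ?_⟩
  rw [map_comm_prod]
  congr 1
  simp [List.map_map, Function.comp, Function.surjInv_eq hf]

/-- If `f : G → Q` is surjective and every element of `Q` is a product of at most `n`
commutators, then every element `a` of the second derived subgroup `⁅⁅G,G⁆,⁅G,G⁆⁆`
can be written `a = c * b` with `b ∈ Xₙ` and `c ∈ ker f ∩ ⁅⁅G,G⁆,⁅G,G⁆⁆`. -/
theorem second_derived_subset_ker_mul_iteratedCommutatorProds
    {G Q : Type*} [Group G] [Group Q] (f : G →* Q) (n : ℕ)
    (hf : Function.Surjective f) (hn : 1 ≤ n)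
    (hQ : ∀ q : Q, q ∈ commutatorProds Q n) :
    ∀ a ∈ ⁅commutator G, commutator G⁆,
      ∃ c ∈ f.ker ⊓ ⁅commutator G, commutator G⁆,
        ∃ b ∈ iteratedCommutatorProds G n, a = c * b := by
  intro a ha
  -- choice function lifting each q to commutatorProds G n
  choose g hg hfg using lift_commutatorProds f n hf hQ
  obtain ⟨l, hl, hprod⟩ := hQ (f a)
  set b : G := ((l.map fun p => (g p.1, g p.2)).map fun p => ⁅p.1, p.2⁆).prod with hb
  have hbX : b ∈ iteratedCommutatorProds G n := by
    refine ⟨l.map fun p => (g p.1, g p.2), by simpa using hl, ?_, rfl⟩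
    intro p hp
    simp only [List.mem_map] at hp
    obtain ⟨q, -, rfl⟩ := hp
    exact ⟨hg _, hg _⟩
  have hfb : f b = f a := by
    rw [hb, map_comm_prod, hprod]
    congr 1
    simp [List.map_map, Function.comp, hfg]
  refine ⟨a * b⁻¹, ⟨?_, ?_⟩, b, hbX, by group⟩
  · simp [MonoidHom.mem_ker, hfb]
  · exact mul_mem ha (Subgroup.inv_mem _ (iterated_subset_second G n hbX))
end
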